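/- For k ≥ 2, the edge connectivity of every Nash equilibrium network in the avg-flowNCG is at least k. -/

import Mathlib

open Finset

noncomputable section

/-- Total capacity crossing the cut `(A, Aᶜ)`: each unordered crossing pair
is counted once (for symmetric capacities). -/
def cutCap {V : Type*} [Fintype V] [DecidableEq V] (c : V → V → ℕ) (A : Finset V) : ℕ :=
  ∑ u ∈ A, ∑ v ∈ Aᶜ, c u v

/-- Local edge connectivity between `v` and `w`: the minimum capacity of a cut
separating `v` from `w`. -/
def localConn {V : Type*} [Fintype V] [DecidableEq V] (c : V → V → ℕ) (v w : V) : ℕ :=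
  sInf {m | ∃ A : Finset V, v ∈ A ∧ w ∉ A ∧ cutCap c A = m}

/-- Edge connectivity of the capacitated graph: the minimum capacity of a
nontrivial cut. -/
def edgeConn {V : Type*} [Fintype V] [DecidableEq V] (c : V → V → ℕ) : ℕ :=
  sInf {m | ∃ A : Finset V, A.Nonempty ∧ A ≠ Finset.univ ∧ cutCap c A = m}

/-- Weighted degree of a vertex: sum of capacities of incident edges. -/
def wdeg {V : Type*} [Fintype V] [DecidableEq V] (c : V → V → ℕ) (v : V) : ℕ :=
  ∑ w, c v w

/-- The undirected capacity induced by the bought (directed) capacities `b`. -/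
def cap {V : Type*} (b : V → V → ℕ) : V → V → ℕ := fun u v => b u v + b v u

/-- A strategy profile is feasible for budget `k` if nobody buys a self-loop
and each agent's total bought capacity is at most `k`. -/
def Feasible {V : Type*} [Fintype V] (k : ℕ) (b : V → V → ℕ) : Prop :=
  ∀ v, b v v = 0 ∧ ∑ w, b v w ≤ k

/-- Utility of agent `v` in the min-flowNCG: the lexicographic pair of the
edge connectivity of the network and the number of well-connected nodes. -/
def minUtil {V : Type*} [Fintype V] [DecidableEq V] (b : V → V → ℕ) (v : V) : ℕ × ℕ :=
  (edgeConn (cap b),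
    Set.ncard {w | w ≠ v ∧ edgeConn (cap b) < localConn (cap b) v w})

/-- Nash equilibrium of the min-flowNCG: the profile is feasible and no agent
can strictly lexicographically improve its utility by a unilateral deviation. -/
def MinNE {V : Type*} [Fintype V] [DecidableEq V] (k : ℕ) (b : V → V → ℕ) : Prop :=
  Feasible k b ∧ ∀ (v : V) (s : V → ℕ), s v = 0 → (∑ w, s w) ≤ k →
    ¬ Prod.Lex (· < ·) (· < ·) (minUtil b v) (minUtil (Function.update b v s) v)

/-- Utility of agent `v` in the avg-flowNCG: the average local edge
connectivity (max-flow value) from `v` to every other node. -/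
def avgUtil {V : Type*} [Fintype V] [DecidableEq V] (b : V → V → ℕ) (v : V) : ℚ :=
  (∑ w ∈ Finset.univ.erase v, (localConn (cap b) v w : ℚ)) / ((Fintype.card V : ℚ) - 1)

/-- Nash equilibrium of the avg-flowNCG: the profile is feasible and no agent
can strictly increase its utility by a unilateral deviation. -/
def AvgNE {V : Type*} [Fintype V] [DecidableEq V] (k : ℕ) (b : V → V → ℕ) : Prop :=
  Feasible k b ∧ ∀ (v : V) (s : V → ℕ), s v = 0 → (∑ w, s w) ≤ k →
    avgUtil (Function.update b v s) v ≤ avgUtil b v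

section Helpers
variable {V : Type*} [Fintype V] [DecidableEq V]

lemma cutCap_eq_sum_ite (c : V → V → ℕ) (A : Finset V) :
    cutCap c A = ∑ u, ∑ w, if u ∈ A ∧ w ∉ A then c u w else 0 := by
  rw [cutCap]
  rw [← Finset.sum_filter_add_sum_filter_not Finset.univ (· ∈ A)]
  have h1 : ∀ u ∈ Finset.univ.filter (· ∉ A), (∑ w, if u ∈ A ∧ w ∉ A then c u w else 0) = 0 := by
    intro u hu
    simp only [Finset.mem_filter] at hu
    exact Finset.sum_eq_zero (fun w _ => by simp [hu.2])
  rw [Finset.sum_congr rfl h1, Finset.sum_const, smul_zero, add_zero]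
  have h2 : Finset.univ.filter (· ∈ A) = A := by ext x; simp
  rw [h2]
  refine Finset.sum_congr rfl (fun u hu => ?_)
  rw [← Finset.sum_filter]
  congr 1
  ext w; simp [hu]

lemma cutCap_add (c₁ c₂ : V → V → ℕ) (A : Finset V) :
    cutCap (fun x y => c₁ x y + c₂ x y) A = cutCap c₁ A + cutCap c₂ A := by
  simp [cutCap, Finset.sum_add_distrib]

lemma cutCap_compl {c : V → V → ℕ} (hs : ∀ x y, c x y = c y x) (A : Finset V) :
    cutCap c Aᶜ = cutCap c A := by
  rw [cutCap, cutCap, compl_compl, Finset.sum_comm]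
  exact Finset.sum_congr rfl fun u _ => Finset.sum_congr rfl fun w _ => (hs u w).symm

lemma cutCap_submod (c : V → V → ℕ) (A B : Finset V) :
    cutCap c (A ∩ B) + cutCap c (A ∪ B) ≤ cutCap c A + cutCap c B := by
  simp only [cutCap_eq_sum_ite, ← Finset.sum_add_distrib]
  refine Finset.sum_le_sum fun u _ => Finset.sum_le_sum fun w _ => ?_
  by_cases hA : u ∈ A <;> by_cases hB : u ∈ B <;> by_cases kA : w ∈ A <;> by_cases kB : w ∈ B <;>
    simp [hA, hB, kA, kB]

lemma cutCap_posimod {c : V → V → ℕ} (hs : ∀ x y, c x y = c y x) (A B : Finset V) :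
    cutCap c (A \ B) + cutCap c (B \ A) ≤ cutCap c A + cutCap c B := by
  have h := cutCap_submod c A Bᶜ
  rw [cutCap_compl hs B] at h
  have e1 : A ∩ Bᶜ = A \ B := by ext x; simp [Finset.mem_sdiff, and_comm]
  have e2 : A ∪ Bᶜ = (B \ A)ᶜ := by ext x; simp [Finset.mem_sdiff]; tauto
  rw [e1, e2, cutCap_compl hs] at h
  linarith

lemma localConn_le (c : V → V → ℕ) {v w : V} {A : Finset V} (hv : v ∈ A) (hw : w ∉ A) :
    localConn c v w ≤ cutCap c A :=
  Nat.sInf_le ⟨A, hv, hw, rfl⟩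

lemma exists_localConn_cut (c : V → V → ℕ) {v w : V} (hvw : w ≠ v) :
    ∃ A : Finset V, v ∈ A ∧ w ∉ A ∧ cutCap c A = localConn c v w := by
  have hne : {m | ∃ A : Finset V, v ∈ A ∧ w ∉ A ∧ cutCap c A = m}.Nonempty :=
    ⟨cutCap c {v}, {v}, Finset.mem_singleton_self v, by simp [hvw], rfl⟩
  exact Nat.sInf_mem hne

lemma le_localConn (c : V → V → ℕ) {v w : V} {m : ℕ} (hvw : w ≠ v)
    (h : ∀ A : Finset V, v ∈ A → w ∉ A → m ≤ cutCap c A) : m ≤ localConn c v w := by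
  have hne : {n | ∃ A : Finset V, v ∈ A ∧ w ∉ A ∧ cutCap c A = n}.Nonempty :=
    ⟨cutCap c {v}, {v}, Finset.mem_singleton_self v, by simp [hvw], rfl⟩
  exact le_csInf hne (by rintro n ⟨A, hv, hw, rfl⟩; exact h A hv hw)

lemma edgeConn_le (c : V → V → ℕ) {A : Finset V} (hA : A.Nonempty) (hA' : A ≠ Finset.univ) :
    edgeConn c ≤ cutCap c A :=
  Nat.sInf_le ⟨A, hA, hA', rfl⟩

lemma edgeConn_le_localConn (c : V → V → ℕ) {v w : V} (hvw : w ≠ v) :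
    edgeConn c ≤ localConn c v w := by
  obtain ⟨A, hv, hw, hc⟩ := exists_localConn_cut c hvw
  rw [← hc]
  exact edgeConn_le c ⟨v, hv⟩ (fun h => hw (h ▸ Finset.mem_univ w))

lemma cutCap_pair {v t : V} (ht : t ≠ v) {S : Finset V} (hv : v ∈ S) :
    cutCap (fun x y => if (x = v ∧ y = t) ∨ (x = t ∧ y = v) then 1 else 0) S
      = if t ∈ S then 0 else 1 := by
  rw [cutCap_eq_sum_ite]
  by_cases htS : t ∈ S
  · simp only [htS, if_true]
    refine Finset.sum_eq_zero fun u _ => Finset.sum_eq_zero fun w _ => ?_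
    by_cases h1 : u ∈ S ∧ w ∉ S
    · have hwv : ¬ (w = v) := fun e => h1.2 (e ▸ hv)
      have hwt : ¬ (w = t) := fun e => h1.2 (e ▸ htS)
      simp [h1, hwv, hwt]
    · simp [h1]
  · simp only [htS, if_false]
    rw [Finset.sum_eq_single v]
    · rw [Finset.sum_eq_single t]
      · simp [hv, htS]
      · intro w _ hwt
        have : ¬ (w = t) := hwt
        by_cases h1 : v ∈ S ∧ w ∉ S <;> simp [h1, this, ht] <;> (intro e; exact absurd e.symm ht)
      · intro h; exact absurd (Finset.mem_univ t) h
    · intro u _ huv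
      refine Finset.sum_eq_zero fun w _ => ?_
      by_cases h1 : u ∈ S ∧ w ∉ S
      · have hut : ¬ (u = t) := fun e => htS (e ▸ h1.1)
        simp [h1, huv, hut]
      · simp [h1]
    · intro h; exact absurd (Finset.mem_univ v) h


lemma minimal_side_conn {c : V → V → ℕ} (hs : ∀ x y, c x y = c y x) {M : Finset V}
    (hMcut : cutCap c M = edgeConn c)
    (hmin : ∀ D : Finset V, D.Nonempty → cutCap c D = edgeConn c → ¬ D ⊂ M)
    {x y : V} (hx : x ∈ M) (hy : y ∈ M) (hxy : y ≠ x) :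
    edgeConn c + 1 ≤ localConn c x y := by
  by_contra h
  push_neg at h
  have h' : localConn c x y ≤ edgeConn c := by omega
  obtain ⟨S, hxS, hyS, hScut⟩ := exists_localConn_cut c hxy
  have hSu : S ≠ Finset.univ := fun e => hyS (e ▸ Finset.mem_univ y)
  have hSlam : cutCap c S = edgeConn c :=
    le_antisymm (hScut ▸ h') (edgeConn_le c ⟨x, hxS⟩ hSu)
  by_cases hun : S ∪ M = Finset.univ
  · refine hmin Sᶜ ⟨y, Finset.mem_compl.2 hyS⟩ ?_ ?_
    · rw [cutCap_compl hs]; exact hSlam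
    · constructor
      · intro z hz
        rcases Finset.mem_union.1 (hun ▸ Finset.mem_univ z) with h1 | h1
        · exact absurd h1 (Finset.mem_compl.1 hz)
        · exact h1
      · intro hsub
        exact (Finset.mem_compl.1 (hsub hx)) hxS
  · refine hmin (S ∩ M) ⟨x, Finset.mem_inter.2 ⟨hxS, hx⟩⟩ ?_ ?_
    · have h1 := cutCap_submod c S M
      have h2 : edgeConn c ≤ cutCap c (S ∩ M) :=
        edgeConn_le c ⟨x, Finset.mem_inter.2 ⟨hxS, hx⟩⟩
          (fun e => hyS (Finset.mem_inter.1 (e ▸ Finset.mem_univ y)).1)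
      have h3 : edgeConn c ≤ cutCap c (S ∪ M) :=
        edgeConn_le c ⟨x, Finset.mem_union.2 (Or.inl hxS)⟩ hun
      omega
    · exact ⟨Finset.inter_subset_right, fun hsub =>
        hyS (Finset.mem_inter.1 (hsub hy)).1⟩

lemma cap_update_eq (b : V → V → ℕ) (v : V) (s : V → ℕ) (x y : V) :
    cap (Function.update b v s) x y =
      (if x = v then s y else b x y) + (if y = v then s x else b y x) := by
  simp [cap, Function.update_apply, ite_apply]

lemma cap_update_add {b : V → V → ℕ} {v w' : V} (hwv : w' ≠ v) (hbvv : b v v = 0) (x y : V) :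
    cap (Function.update b v (Function.update (b v) w' (b v w' + 1))) x y =
    cap b x y + (if (x = v ∧ y = w') ∨ (x = w' ∧ y = v) then 1 else 0) := by
  rw [cap_update_eq]
  by_cases hx : x = v <;> by_cases hy : y = v <;>
    by_cases hxw : x = w' <;> by_cases hyw : y = w' <;>
    simp_all [cap, Function.update_apply] <;> omega

lemma cap_update_move {b : V → V → ℕ} {v a w' : V} (hav : a ≠ v) (haw : a ≠ w')
    (hwv : w' ≠ v) (hbvv : b v v = 0) (hba1 : 1 ≤ b v a) (x y : V) :
    cap (Function.update b v
        (fun z => if z = a then b v a - 1 else if z = w' then b v w' + 1 else b v z)) x y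
      + (if (x = v ∧ y = a) ∨ (x = a ∧ y = v) then 1 else 0) =
    cap b x y + (if (x = v ∧ y = w') ∨ (x = w' ∧ y = v) then 1 else 0) := by
  rw [cap_update_eq]
  by_cases hx : x = v <;> by_cases hy : y = v <;>
    by_cases hxa : x = a <;> by_cases hya : y = a <;>
    by_cases hxw : x = w' <;> by_cases hyw : y = w' <;>
    simp_all [cap] <;> omega

end Helpers

/-- For `k ≥ 2`, the edge connectivity of every Nash equilibrium network in
the avg-flowNCG is at least `k`. -/
theorem avgNE_edgeConn_ge {V : Type*} [Fintype V] [DecidableEq V]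
    (k : ℕ) (b : V → V → ℕ)
    (hk2 : 2 ≤ k) (hk : k < Fintype.card V)
    (hne : AvgNE k b) :
    k ≤ edgeConn (cap b) := by
  obtain ⟨hfeas, hNE⟩ := hne
  set c := cap b with hc
  have hcsymm : ∀ x y, c x y = c y x := fun x y => by simp [hc, cap, add_comm]
  have hn3 : 3 ≤ Fintype.card V := by omega
  have hdpos : (0:ℚ) < (Fintype.card V : ℚ) - 1 := by
    have h3 : (3:ℚ) ≤ (Fintype.card V : ℚ) := by exact_mod_cast hn3
    linarith
  have key : ∀ (v : V) (s : V → ℕ), s v = 0 → (∑ w, s w) ≤ k →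
      ∑ w ∈ Finset.univ.erase v, localConn (cap (Function.update b v s)) v w ≤
        ∑ w ∈ Finset.univ.erase v, localConn c v w := by
    intro v s h0 hk'
    have h := hNE v s h0 hk'
    simp only [avgUtil] at h
    rw [div_le_div_iff₀ hdpos hdpos] at h
    have h2 := (mul_le_mul_iff_of_pos_right hdpos).1 h
    exact_mod_cast h2
  -- every agent spends its whole budget
  have hfull : ∀ v, ∑ w, b v w = k := by
    intro v
    by_contra hneq
    have hlt : ∑ w, b v w < k := lt_of_le_of_ne (hfeas v).2 hneq
    have : Nontrivial V := Fintype.one_lt_card_iff_nontrivial.mp (by omega)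
    obtain ⟨w', hwv⟩ := exists_ne v
    set s := Function.update (b v) w' (b v w' + 1) with hsdef
    have hs0 : s v = 0 := by
      rw [hsdef, Function.update_of_ne (Ne.symm hwv)]
      exact (hfeas v).1
    have hssum : ∑ w, s w = (∑ w, b v w) + 1 := by
      rw [hsdef, Finset.sum_update_of_mem (Finset.mem_univ w'),
        ← Finset.add_sum_erase _ (b v) (Finset.mem_univ w'), ← Finset.erase_eq]
      ring
    have hk' : ∑ w, s w ≤ k := by omega
    have hkey := key v s hs0 hk'
    set c' := cap (Function.update b v s) with hc'
    have hcc : ∀ x y, c' x y = c x y +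
        (if (x = v ∧ y = w') ∨ (x = w' ∧ y = v) then 1 else 0) := by
      intro x y
      rw [hc', hsdef, hc]
      exact cap_update_add hwv (hfeas v).1 x y
    have hcut : ∀ S : Finset V, v ∈ S →
        cutCap c' S = cutCap c S + (if w' ∈ S then 0 else 1) := by
      intro S hvS
      have h1 : cutCap c' S = cutCap (fun x y => c x y +
          (if (x = v ∧ y = w') ∨ (x = w' ∧ y = v) then 1 else 0)) S := by
        congr 1; funext x y; exact hcc x y
      rw [h1, cutCap_add, cutCap_pair hwv hvS]
    have hmono : ∀ w ∈ Finset.univ.erase v, localConn c v w ≤ localConn c' v w := by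
      intro w hw
      have hwv' : w ≠ v := Finset.ne_of_mem_erase hw
      apply le_localConn c' hwv'
      intro S hvS hwS
      have h1 := localConn_le c hvS hwS
      rw [hcut S hvS]
      split <;> omega
    have hstrict : localConn c v w' + 1 ≤ localConn c' v w' := by
      apply le_localConn c' hwv
      intro S hvS hwS
      have h1 := localConn_le c hvS hwS
      rw [hcut S hvS, if_neg hwS]
      omega
    have hsum := Finset.sum_lt_sum hmono
      ⟨w', Finset.mem_erase.2 ⟨hwv, Finset.mem_univ w'⟩, by omega⟩
    omega
  -- main contradiction
  by_contra hcon
  push_neg at hcon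
  set lam := edgeConn c with hlam
  have hexists : {m | ∃ A : Finset V, A.Nonempty ∧ A ≠ Finset.univ ∧ cutCap c A = m}.Nonempty := by
    have hnt : Nontrivial V := Fintype.one_lt_card_iff_nontrivial.mp (by omega)
    obtain ⟨v₀⟩ := (inferInstance : Nonempty V)
    refine ⟨cutCap c {v₀}, {v₀}, Finset.singleton_nonempty v₀, ?_, rfl⟩
    intro h
    have h2 : ({v₀} : Finset V).card = (Finset.univ : Finset V).card := by rw [h]
    rw [Finset.card_singleton, Finset.card_univ] at h2
    omega
  have hcardsA : {j | ∃ S : Finset V, S.Nonempty ∧ S ≠ Finset.univ ∧ cutCap c S = lam ∧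
      S.card = j}.Nonempty := by
    obtain ⟨A₀, h1, h2, h3⟩ := Nat.sInf_mem hexists
    exact ⟨A₀.card, A₀, h1, h2, h3, rfl⟩
  obtain ⟨A, hAne, hAu, hAcut, hAcard⟩ := Nat.sInf_mem hcardsA
  have hminA : ∀ D : Finset V, D.Nonempty → cutCap c D = lam → ¬ D ⊂ A := by
    intro D h1 h2 hss
    have hDu : D ≠ Finset.univ := by
      intro e
      rw [e] at hss
      exact hss.2 (Finset.subset_univ A)
    have hmem : D.card ∈ {j | ∃ S : Finset V, S.Nonempty ∧ S ≠ Finset.univ ∧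
        cutCap c S = lam ∧ S.card = j} := ⟨D, h1, hDu, h2, rfl⟩
    have h4 := Nat.sInf_le hmem
    have hlt := Finset.card_lt_card hss
    omega
  have hcardsC : {j | ∃ S : Finset V, S.Nonempty ∧ S ⊆ Aᶜ ∧ cutCap c S = lam ∧
      S.card = j}.Nonempty := by
    refine ⟨Aᶜ.card, Aᶜ, ?_, Finset.Subset.refl _, ?_, rfl⟩
    · rwa [← Finset.compl_ne_univ_iff_nonempty, compl_compl]
    · rw [cutCap_compl hcsymm]; exact hAcut
  obtain ⟨C, hCne, hCsub, hCcut, hCcard⟩ := Nat.sInf_mem hcardsC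
  have hCu : C ≠ Finset.univ := by
    obtain ⟨x, hx⟩ := hAne
    intro e
    exact Finset.mem_compl.1 (hCsub (e ▸ Finset.mem_univ x)) hx
  have hminC : ∀ D : Finset V, D.Nonempty → cutCap c D = lam → ¬ D ⊂ C := by
    intro D h1 h2 hss
    have hmem : D.card ∈ {j | ∃ S : Finset V, S.Nonempty ∧ S ⊆ Aᶜ ∧
        cutCap c S = lam ∧ S.card = j} := ⟨D, h1, hss.1.trans hCsub, h2, rfl⟩
    have h4 := Nat.sInf_le hmem
    have hlt := Finset.card_lt_card hss
    omega
  have hAC : A.card ≤ C.card := by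
    have hmem : C.card ∈ {j | ∃ S : Finset V, S.Nonempty ∧ S ≠ Finset.univ ∧
        cutCap c S = lam ∧ S.card = j} := ⟨C, hCne, hCu, hCcut, rfl⟩
    have h4 := Nat.sInf_le hmem
    omega
  have hIA : ∀ {x y : V}, x ∈ A → y ∈ A → y ≠ x → lam + 1 ≤ localConn c x y :=
    fun {x y} hx hy hxy => minimal_side_conn hcsymm hAcut hminA hx hy hxy
  have hIC : ∀ {x y : V}, x ∈ C → y ∈ C → y ≠ x → lam + 1 ≤ localConn c x y :=
    fun {x y} hx hy hxy => minimal_side_conn hcsymm hCcut hminC hx hy hxy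
  obtain ⟨v, hvA⟩ := hAne
  obtain ⟨w', hwC⟩ := hCne
  have hwA : w' ∉ A := Finset.mem_compl.1 (hCsub hwC)
  have hwv : w' ≠ v := fun e => hwA (e ▸ hvA)
  have hvC : v ∉ C := fun h => Finset.mem_compl.1 (hCsub h) hvA
  have hcross : ∑ w ∈ Aᶜ, b v w ≤ lam := by
    calc ∑ w ∈ Aᶜ, b v w ≤ ∑ w ∈ Aᶜ, c v w :=
          Finset.sum_le_sum fun w _ => by simp [hc, cap]
      _ ≤ ∑ u ∈ A, ∑ w ∈ Aᶜ, c u w :=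
          Finset.single_le_sum (f := fun u => ∑ w ∈ Aᶜ, c u w)
            (fun u _ => Nat.zero_le _) hvA
      _ = lam := hAcut
  have hinA : 1 ≤ ∑ w ∈ A, b v w := by
    have hsplit : ∑ w ∈ A, b v w + ∑ w ∈ Aᶜ, b v w = ∑ w, b v w :=
      Finset.sum_add_sum_compl A _
    have h4 := hfull v
    omega
  obtain ⟨a, haA, hba⟩ := Finset.exists_ne_zero_of_sum_ne_zero
    (by omega : ∑ w ∈ A, b v w ≠ 0)
  have hba1 : 1 ≤ b v a := Nat.one_le_iff_ne_zero.2 hba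
  have hav : a ≠ v := fun e => by rw [e] at hba; exact hba (hfeas v).1
  have haw : a ≠ w' := fun e => hwA (e ▸ haA)
  -- the deviation: move one unit from the edge (v,a) to the edge (v,w')
  set sdev : V → ℕ := fun z => if z = a then b v a - 1
      else if z = w' then b v w' + 1 else b v z with hsdev
  have hs0 : sdev v = 0 := by
    simp only [hsdev, if_neg (Ne.symm hav), if_neg (Ne.symm hwv)]
    exact (hfeas v).1
  have hwea : w' ∈ Finset.univ.erase a := Finset.mem_erase.2 ⟨Ne.symm haw, Finset.mem_univ w'⟩
  have hsumdev : ∑ y, sdev y = ∑ y, b v y := by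
    rw [← Finset.add_sum_erase _ sdev (Finset.mem_univ a),
        ← Finset.add_sum_erase _ sdev hwea,
        ← Finset.add_sum_erase _ (b v) (Finset.mem_univ a),
        ← Finset.add_sum_erase _ (b v) hwea]
    have hrest : ∑ y ∈ (Finset.univ.erase a).erase w', sdev y =
        ∑ y ∈ (Finset.univ.erase a).erase w', b v y := by
      refine Finset.sum_congr rfl fun y hy => ?_
      have h1 : y ≠ w' := (Finset.mem_erase.1 hy).1
      have h2 : y ≠ a := (Finset.mem_erase.1 (Finset.mem_erase.1 hy).2).1
      simp [hsdev, h1, h2]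
    have hda : sdev a = b v a - 1 := by simp [hsdev]
    have hdw : sdev w' = b v w' + 1 := by simp [hsdev, Ne.symm haw]
    rw [hrest, hda, hdw]
    omega
  have hk' : ∑ y, sdev y ≤ k := by rw [hsumdev, hfull v]
  have hkey := key v sdev hs0 hk'
  set c' := cap (Function.update b v sdev) with hc'
  have hcc : ∀ x y, c' x y + (if (x = v ∧ y = a) ∨ (x = a ∧ y = v) then 1 else 0) =
      c x y + (if (x = v ∧ y = w') ∨ (x = w' ∧ y = v) then 1 else 0) := by
    intro x y
    rw [hc', hsdev, hc]
    exact cap_update_move hav haw hwv (hfeas v).1 hba1 x y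
  have hcut : ∀ S : Finset V, v ∈ S →
      cutCap c' S + (if a ∈ S then 0 else 1) = cutCap c S + (if w' ∈ S then 0 else 1) := by
    intro S hvS
    have h1 : cutCap (fun x y => c' x y +
        (if (x = v ∧ y = a) ∨ (x = a ∧ y = v) then 1 else 0)) S =
        cutCap (fun x y => c x y +
        (if (x = v ∧ y = w') ∨ (x = w' ∧ y = v) then 1 else 0)) S := by
      congr 1; funext x y; exact hcc x y
    rw [cutCap_add, cutCap_add, cutCap_pair hav hvS, cutCap_pair hwv hvS] at h1
    exact h1
  have hlamva : lam + 1 ≤ localConn c v a := hIA hvA haA hav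
  -- every vertex of C strictly gains
  have hG : ∀ w ∈ C, localConn c v w + 1 ≤ localConn c' v w := by
    intro w hwC'
    have hwv' : w ≠ v := fun e => hvC (e ▸ hwC')
    have hwA' : w ∉ A := Finset.mem_compl.1 (hCsub hwC')
    have hup : localConn c v w ≤ lam := by
      have h1 := localConn_le c hvA hwA'
      omega
    have hlow : lam + 1 ≤ localConn c' v w := by
      apply le_localConn c' hwv'
      intro S hvS hwS
      have hcutS := hcut S hvS
      have hge : lam ≤ cutCap c S :=
        edgeConn_le c ⟨v, hvS⟩ (fun e => hwS (e ▸ Finset.mem_univ w))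
      by_cases haS : a ∈ S <;> by_cases hwS' : w' ∈ S
      · have hww : w ≠ w' := fun e => hwS (by rw [e]; exact hwS')
        have h1 : localConn c w' w ≤ cutCap c S := localConn_le c hwS' hwS
        have h2 := hIC hwC hwC' hww
        simp only [haS, hwS', if_true] at hcutS
        omega
      · simp only [haS, if_true, hwS', if_false] at hcutS
        omega
      · have hww : w' ≠ w := fun e => hwS (e ▸ hwS')
        have hp := cutCap_posimod hcsymm C S
        have h1 : localConn c w w' ≤ cutCap c (C \ S) :=
          localConn_le c (Finset.mem_sdiff.2 ⟨hwC', hwS⟩)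
            (fun hm => (Finset.mem_sdiff.1 hm).2 hwS')
        have h2 : localConn c v a ≤ cutCap c (S \ C) :=
          localConn_le c (Finset.mem_sdiff.2 ⟨hvS, hvC⟩)
            (fun hm => haS (Finset.mem_sdiff.1 hm).1)
        have h3 := hIC hwC' hwC hww
        rw [hCcut] at hp
        simp only [haS, if_false, hwS', if_true] at hcutS
        omega
      · have h2 : localConn c v a ≤ cutCap c S := localConn_le c hvS haS
        simp only [haS, hwS', if_false] at hcutS
        omega
    omega
  -- no vertex outside A loses
  have hN : ∀ w ∈ Aᶜ, localConn c v w ≤ localConn c' v w := by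
    intro w hwAc
    have hwA' : w ∉ A := Finset.mem_compl.1 hwAc
    have hwv' : w ≠ v := fun e => hwA' (e ▸ hvA)
    have hup : localConn c v w ≤ lam := by
      have h1 := localConn_le c hvA hwA'
      omega
    have hlow : lam ≤ localConn c' v w := by
      apply le_localConn c' hwv'
      intro S hvS hwS
      have hcutS := hcut S hvS
      have hge : lam ≤ cutCap c S :=
        edgeConn_le c ⟨v, hvS⟩ (fun e => hwS (e ▸ Finset.mem_univ w))
      by_cases haS : a ∈ S <;> by_cases hwS' : w' ∈ S <;>
        simp only [haS, hwS', if_true, if_false] at hcutS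
      · omega
      · omega
      · have h2 : localConn c v a ≤ cutCap c S := localConn_le c hvS haS
        omega
      · have h2 : localConn c v a ≤ cutCap c S := localConn_le c hvS haS
        omega
    omega
  -- nobody loses more than one
  have hL : ∀ w ∈ Finset.univ.erase v, localConn c v w ≤ localConn c' v w + 1 := by
    intro w hw
    have hwv' : w ≠ v := Finset.ne_of_mem_erase hw
    obtain ⟨S, hvS, hwS, hScut⟩ := exists_localConn_cut c' hwv'
    have h1 : localConn c v w ≤ cutCap c S := localConn_le c hvS hwS
    have hcutS := hcut S hvS
    rw [hScut] at hcutS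
    by_cases haS : a ∈ S <;> by_cases hwS' : w' ∈ S <;>
      simp only [haS, hwS', if_true, if_false] at hcutS <;> omega
  -- assemble
  have hdisj : Disjoint (A.erase v) Aᶜ :=
    (disjoint_compl_right : Disjoint A Aᶜ).mono_left (Finset.erase_subset v A)
  have hpart : Finset.univ.erase v = (A.erase v) ∪ Aᶜ := by
    ext x
    simp only [Finset.mem_erase, Finset.mem_univ, and_true, Finset.mem_union, Finset.mem_compl]
    by_cases hxA : x ∈ A
    · simp [hxA]
    · simp [hxA]
      exact fun e => hxA (e ▸ hvA)
  have hS1 : ∑ w ∈ A.erase v, localConn c v w ≤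
      (∑ w ∈ A.erase v, localConn c' v w) + (A.erase v).card := by
    have h1 : ∑ w ∈ A.erase v, localConn c v w ≤
        ∑ w ∈ A.erase v, (localConn c' v w + 1) := by
      refine Finset.sum_le_sum fun w hw => hL w ?_
      exact Finset.mem_erase.2 ⟨(Finset.mem_erase.1 hw).1, Finset.mem_univ w⟩
    rw [Finset.sum_add_distrib, Finset.sum_const, smul_eq_mul, mul_one] at h1
    exact h1
  have hS2 : ∑ w ∈ Aᶜ \ C, localConn c v w ≤ ∑ w ∈ Aᶜ \ C, localConn c' v w :=
    Finset.sum_le_sum fun w hw => hN w (Finset.mem_sdiff.1 hw).1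
  have hS3 : (∑ w ∈ C, localConn c v w) + C.card ≤ ∑ w ∈ C, localConn c' v w := by
    have h1 : ∑ w ∈ C, (localConn c v w + 1) ≤ ∑ w ∈ C, localConn c' v w :=
      Finset.sum_le_sum fun w hw => hG w hw
    rw [Finset.sum_add_distrib, Finset.sum_const, smul_eq_mul, mul_one] at h1
    exact h1
  have hcardAe : (A.erase v).card = A.card - 1 := Finset.card_erase_of_mem hvA
  have hA1 : 1 ≤ A.card := Finset.card_pos.2 ⟨v, hvA⟩
  have hsum1 : ∑ w ∈ Finset.univ.erase v, localConn c v w =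
      ∑ w ∈ A.erase v, localConn c v w + ∑ w ∈ Aᶜ, localConn c v w := by
    rw [hpart, Finset.sum_union hdisj]
  have hsum2 : ∑ w ∈ Finset.univ.erase v, localConn c' v w =
      ∑ w ∈ A.erase v, localConn c' v w + ∑ w ∈ Aᶜ, localConn c' v w := by
    rw [hpart, Finset.sum_union hdisj]
  have hsplitC1 : ∑ w ∈ Aᶜ, localConn c v w =
      ∑ w ∈ Aᶜ \ C, localConn c v w + ∑ w ∈ C, localConn c v w :=
    (Finset.sum_sdiff hCsub).symm
  have hsplitC2 : ∑ w ∈ Aᶜ, localConn c' v w =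
      ∑ w ∈ Aᶜ \ C, localConn c' v w + ∑ w ∈ C, localConn c' v w :=
    (Finset.sum_sdiff hCsub).symm
  rw [hsum1, hsum2, hsplitC1, hsplitC2] at hkey
  omega
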